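/- Lifting an effectivity function along a surjection preserves playability for nonempty proper coalitions and all axioms E1–E5: Let f : S' → S be surjective, E a truly playable effectivity function on S, and define E' by: for G ≠ N, Y ∈ E'(G)(u) iff there exists X ⊆ S with f⁻¹(X) ⊆ Y and X ∈ E(G)(f(u)); and Y ∈ E'(N)(u) iff S'∖Y ∉ E'(∅)(u). Then E' satisfies E1–E5. -/

import Mathlib

open Classical

/-- The lifting of an effectivity function `E` on `S` along a surjection `f : S' → S`:
for `G ≠ N`, `Y ∈ E'(G)(u)` iff `∃ X ⊆ S, f⁻¹(X) ⊆ Y ∧ X ∈ E(G)(f u)`;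
for `G = N`, `Y ∈ E'(N)(u)` iff `S' ∖ Y ∉ E'(∅)(u)`. -/
noncomputable def liftEff {N S S' : Type*} (E : Set N → S → Set (Set S)) (f : S' → S)
    (G : Set N) (u : S') : Set (Set S') :=
  if G = (Set.univ : Set N) then
    {Y : Set S' | Yᶜ ∉ {Z : Set S' | ∃ X : Set S, f ⁻¹' X ⊆ Z ∧ X ∈ E ∅ (f u)}}
  else
    {Y : Set S' | ∃ X : Set S, f ⁻¹' X ⊆ Y ∧ X ∈ E G (f u)}

/-- Lifting a truly playable effectivity function along a surjection preserves E1–E5. -/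
theorem liftEff_playable {N S S' : Type*} [Nonempty N]
    (E : Set N → S → Set (Set S)) (f : S' → S) (hf : Function.Surjective f)
    (E1 : ∀ (G : Set N) (s : S), (∅ : Set S) ∉ E G s)
    (E2 : ∀ (G : Set N) (s : S), (Set.univ : Set S) ∈ E G s)
    (E3 : ∀ (s : S) (X : Set S), Xᶜ ∉ E ∅ s → X ∈ E Set.univ s)
    (E4 : ∀ (G : Set N) (s : S) (X Y : Set S), X ∈ E G s → X ⊆ Y → Y ∈ E G s)
    (E5 : ∀ (G₁ G₂ : Set N) (s : S) (X Y : Set S), G₁ ∩ G₂ = ∅ →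
      X ∈ E G₁ s → Y ∈ E G₂ s → X ∩ Y ∈ E (G₁ ∪ G₂) s)
    (E6 : ∀ s : S, {X | X ∈ E ∅ s ∧ ¬ ∃ Y ∈ E ∅ s, Y ⊂ X}.Nonempty) :
    (∀ (G : Set N) (u : S'), (∅ : Set S') ∉ liftEff E f G u) ∧
    (∀ (G : Set N) (u : S'), (Set.univ : Set S') ∈ liftEff E f G u) ∧
    (∀ (u : S') (Y : Set S'), Yᶜ ∉ liftEff E f ∅ u → Y ∈ liftEff E f Set.univ u) ∧
    (∀ (G : Set N) (u : S') (X Y : Set S'), X ∈ liftEff E f G u → X ⊆ Y →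
      Y ∈ liftEff E f G u) ∧
    (∀ (G₁ G₂ : Set N) (u : S') (X Y : Set S'), G₁ ∩ G₂ = ∅ →
      X ∈ liftEff E f G₁ u → Y ∈ liftEff E f G₂ u → X ∩ Y ∈ liftEff E f (G₁ ∪ G₂) u) := by

  have hne : (∅ : Set N) ≠ Set.univ := by
    obtain ⟨n⟩ := ‹Nonempty N›
    intro h
    exact absurd (h ▸ Set.mem_univ n) (by simp)
  have hpre : ∀ (W : Set S), f ⁻¹' W = ∅ → W = ∅ := by
    intro W h
    ext w
    obtain ⟨u, rfl⟩ := hf w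
    exact ⟨fun hw => (Set.eq_empty_iff_forall_notMem.1 h u hw).elim, fun h => h.elim⟩
  -- key: E1 for the non-univ form
  have key1 : ∀ (G : Set N) (u : S'), ¬ ∃ X : Set S, f ⁻¹' X ⊆ (∅ : Set S') ∧ X ∈ E G (f u) := by
    rintro G u ⟨X, hX, hXE⟩
    have : X = ∅ := hpre X (Set.subset_empty_iff.1 hX)
    exact E1 G (f u) (this ▸ hXE)
  refine ⟨?_, ?_, ?_, ?_, ?_⟩
  · -- E1
    intro G u
    by_cases hG : G = Set.univ
    · subst hG
      simp only [liftEff, if_pos rfl, if_true, Set.mem_setOf_eq, not_not]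
      exact ⟨Set.univ, by simp, E2 ∅ (f u)⟩
    · simp only [liftEff, if_neg hG, Set.mem_setOf_eq]
      exact key1 G u
  · -- E2
    intro G u
    by_cases hG : G = Set.univ
    · subst hG
      simp only [liftEff, if_pos rfl, if_true, Set.mem_setOf_eq, Set.compl_univ]
      exact key1 ∅ u
    · simp only [liftEff, if_neg hG, Set.mem_setOf_eq]
      exact ⟨Set.univ, by simp, E2 G (f u)⟩
  · -- E3
    intro u Y hY
    simp only [liftEff, if_neg hne, Set.mem_setOf_eq] at hY
    simp only [liftEff, if_pos rfl, Set.mem_setOf_eq]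
    exact hY
  · -- E4
    intro G u X Y hX hXY
    by_cases hG : G = Set.univ
    · subst hG
      simp only [liftEff, if_pos rfl, Set.mem_setOf_eq] at hX ⊢
      rintro ⟨W, hW, hWE⟩
      exact hX ⟨W, hW.trans (Set.compl_subset_compl.2 hXY), hWE⟩
    · simp only [liftEff, if_neg hG, Set.mem_setOf_eq] at hX ⊢
      obtain ⟨W, hW, hWE⟩ := hX
      exact ⟨W, hW.trans hXY, hWE⟩
  · -- E5
    intro G₁ G₂ u X Y hdisj hX hY
    by_cases h12 : G₁ ∪ G₂ = Set.univ
    · -- target is the univ case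
      by_cases hG1 : G₁ = Set.univ
      · -- then G₂ = ∅
        have hG2 : G₂ = ∅ := by
          rw [← hdisj, hG1]; simp
        subst hG2
        subst hG1
        simp only [liftEff, if_pos rfl, Set.mem_setOf_eq, if_neg hne] at hX hY
        simp only [liftEff, h12, if_pos rfl, Set.mem_setOf_eq]
        rintro ⟨W, hW, hWE⟩
        obtain ⟨W₂, hW₂, hW₂E⟩ := hY
        refine hX ⟨W ∩ W₂, ?_, ?_⟩
        · rw [Set.preimage_inter]
          intro v hv hvX
          exact hW hv.1 ⟨hvX, hW₂ hv.2⟩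
        · have := E5 ∅ ∅ (f u) W W₂ (by simp) hWE hW₂E
          simpa using this
      · by_cases hG2 : G₂ = Set.univ
        · have hG1' : G₁ = ∅ := by
            rw [← hdisj, hG2]; simp
          subst hG1'
          subst hG2
          simp only [liftEff, if_pos rfl, Set.mem_setOf_eq, if_neg hne] at hX hY
          simp only [liftEff, h12, if_pos rfl, Set.mem_setOf_eq]
          rintro ⟨W, hW, hWE⟩
          obtain ⟨W₁, hW₁, hW₁E⟩ := hX
          refine hY ⟨W ∩ W₁, ?_, ?_⟩
          · rw [Set.preimage_inter]
            intro v hv hvY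
            exact hW hv.1 ⟨hW₁ hv.2, hvY⟩
          · have := E5 ∅ ∅ (f u) W W₁ (by simp) hWE hW₁E
            simpa using this
        · -- both proper, union univ
          simp only [liftEff, if_neg hG1, if_neg hG2, Set.mem_setOf_eq] at hX hY
          obtain ⟨W₁, hW₁, hW₁E⟩ := hX
          obtain ⟨W₂, hW₂, hW₂E⟩ := hY
          have hU : W₁ ∩ W₂ ∈ E Set.univ (f u) := by
            have := E5 G₁ G₂ (f u) W₁ W₂ hdisj hW₁E hW₂E
            rwa [h12] at this
          simp only [liftEff, h12, if_pos rfl, Set.mem_setOf_eq]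
          rintro ⟨W, hW, hWE⟩
          have hE : W₁ ∩ W₂ ∩ W ∈ E (Set.univ ∪ ∅) (f u) :=
            E5 Set.univ ∅ (f u) (W₁ ∩ W₂) W (by simp) hU hWE
          have hemp : W₁ ∩ W₂ ∩ W = ∅ := by
            apply hpre
            rw [Set.eq_empty_iff_forall_notMem]
            rintro v ⟨⟨hv1, hv2⟩, hv3⟩
            exact hW hv3 ⟨hW₁ hv1, hW₂ hv2⟩
          rw [hemp] at hE
          exact E1 _ _ hE
    · -- union proper, so both proper
      have hG1 : G₁ ≠ Set.univ := fun h => h12 (by rw [h]; simp)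
      have hG2 : G₂ ≠ Set.univ := fun h => h12 (by rw [h]; simp)
      simp only [liftEff, if_neg hG1, if_neg hG2, if_neg h12, Set.mem_setOf_eq] at hX hY ⊢
      obtain ⟨W₁, hW₁, hW₁E⟩ := hX
      obtain ⟨W₂, hW₂, hW₂E⟩ := hY
      exact ⟨W₁ ∩ W₂, by rw [Set.preimage_inter]; exact Set.inter_subset_inter hW₁ hW₂,
        E5 G₁ G₂ (f u) W₁ W₂ hdisj hW₁E hW₂E⟩
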